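/- If S is a compact hyperbolic surface, then sys(S) ≤ 2·log(area(S)/π + 2), where sys(S) is the systole of S. -/

import Mathlib

open MeasureTheory UpperHalfPlane Matrix Real
open scoped MatrixGroups

noncomputable instance : MeasurableSpace ℍ := borel ℍ

/-- The hyperbolic area measure on the upper half-plane, with density `1 / y²`
with respect to Lebesgue measure. -/
noncomputable def hyperbolicArea : Measure ℍ :=
  Measure.comap (fun z : ℍ => (z : ℂ))
    (volume.withDensity fun z : ℂ => ENNReal.ofReal (1 / z.im ^ 2))

instance : BorelSpace ℍ := ⟨rfl⟩

lemma me_coe : MeasurableEmbedding (UpperHalfPlane.coe) :=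
  UpperHalfPlane.isOpenEmbedding_coe.measurableEmbedding

lemma hyperbolicArea_apply (s : Set ℍ) (hs : MeasurableSet s) :
    hyperbolicArea s = ∫⁻ w in UpperHalfPlane.coe '' s, ENNReal.ofReal (1 / w.im ^ 2) := by
  rw [hyperbolicArea, me_coe.comap_apply,
    withDensity_apply _ (me_coe.measurableSet_image.2 hs)]

lemma det_complex_smul_one (w : ℂ) :
    ((w • (1 : ℂ →L[ℝ] ℂ)) : ℂ →L[ℝ] ℂ).det = Complex.normSq w := by
  have h : (w • (1 : ℂ →ₗ[ℝ] ℂ)) = Algebra.lmul ℝ ℂ w := by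
    ext z; simp [mul_comm]
  simp only [ContinuousLinearMap.det, ContinuousLinearMap.coe_smul,
    ContinuousLinearMap.one_def, ContinuousLinearMap.coe_id]
  rw [show (w • (LinearMap.id : ℂ →ₗ[ℝ] ℂ)) = Algebra.lmul ℝ ℂ w from h,
    ← Algebra.norm_apply, Algebra.norm_complex_apply]

lemma im_moebius (a b c d : ℝ) (h : a * d - b * c = 1) (w : ℂ)
    (hd : (c : ℂ) * w + d ≠ 0) :
    (((a : ℂ) * w + b) / ((c : ℂ) * w + d)).im
      = w.im / Complex.normSq ((c : ℂ) * w + d) := by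
  have hn : Complex.normSq ((c : ℂ) * w + d) ≠ 0 := by
    simpa using hd
  rw [Complex.div_im, div_sub_div_same, div_eq_div_iff hn hn]
  simp only [Complex.add_im, Complex.add_re, Complex.mul_im, Complex.mul_re,
    Complex.ofReal_re, Complex.ofReal_im]
  linear_combination (w.im * Complex.normSq ((c : ℂ) * w + d)) * h

lemma deriv_moebius (a b c d : ℝ) (h : a * d - b * c = 1) (w : ℂ)
    (hd : (c : ℂ) * w + d ≠ 0) :
    HasDerivAt (fun w : ℂ => ((a : ℂ) * w + b) / ((c : ℂ) * w + d))
      ((((c : ℂ) * w + d) ^ 2)⁻¹) w := by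
  have h1 : HasDerivAt (fun w : ℂ => (a : ℂ) * w + b) (a : ℂ) w := by
    simpa using ((hasDerivAt_id w).const_mul (a : ℂ)).add_const (b : ℂ)
  have h2 : HasDerivAt (fun w : ℂ => (c : ℂ) * w + d) (c : ℂ) w := by
    simpa using ((hasDerivAt_id w).const_mul (c : ℂ)).add_const (d : ℂ)
  have hC : (a : ℂ) * d - b * c = 1 := by exact_mod_cast h
  have := h1.div h2 hd
  have hnum : (a : ℂ) * ((c : ℂ) * w + d) - ((a : ℂ) * w + b) * c = 1 := by
    linear_combination hC
  rw [hnum, one_div] at this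
  exact this

lemma hyperbolicArea_smul_image (g : SL(2, ℝ)) (s : Set ℍ) (hs : MeasurableSet s) :
    hyperbolicArea ((g • ·) '' s) = hyperbolicArea s := by
  set a : ℝ := g 0 0 with ha
  set b : ℝ := g 0 1 with hb
  set c : ℝ := g 1 0 with hc
  set d : ℝ := g 1 1 with hd
  have hdet : a * d - b * c = 1 := by
    have := g.prop; rw [Matrix.det_fin_two] at this; exact this
  set f : ℂ → ℂ := fun w => ((a : ℂ) * w + b) / ((c : ℂ) * w + d) with hf
  have hden : ∀ z : ℍ, (c : ℂ) * (z : ℂ) + d ≠ 0 := by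
    intro z hz
    have him : c * z.im = 0 := by
      have := congrArg Complex.im hz
      simpa [UpperHalfPlane.coe_im] using this
    have hc0 : c = 0 := by
      rcases mul_eq_zero.1 him with h | h
      · exact h
      · exact absurd h z.im_ne_zero
    have hd0 : d = 0 := by
      have := congrArg Complex.re hz
      simpa [hc0] using this
    rw [hc0, hd0] at hdet; simp at hdet
  have h1 : ∀ z : ℍ, (↑(g • z) : ℂ) = f (z : ℂ) := by
    intro z
    rw [specialLinearGroup_apply]
    simp [hf]
    rfl
  have him : ∀ z : ℍ, (g • z).im = z.im / Complex.normSq ((c : ℂ) * (z : ℂ) + d) := by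
    intro z
    have : (g • z).im = (f (z : ℂ)).im := by
      rw [← UpperHalfPlane.coe_im, h1 z]
    rw [this, hf]
    exact im_moebius a b c d hdet _ (hden z)
  have hE : MeasurableSet (UpperHalfPlane.coe '' s) := me_coe.measurableSet_image.2 hs
  have hmeas_im : MeasurableSet ((g • ·) '' s) := by
    have heq : (g • ·) '' s = (fun z : ℍ => g⁻¹ • z) ⁻¹' s := by
      ext z
      constructor
      · rintro ⟨w, hw, rfl⟩; simpa using hw
      · intro hz; exact ⟨g⁻¹ • z, hz, by simp⟩
    rw [heq]
    exact ((isometry_smul ℍ g⁻¹).continuous.measurable) hs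
  rw [hyperbolicArea_apply _ hmeas_im, hyperbolicArea_apply _ hs]
  have himg : UpperHalfPlane.coe '' ((g • ·) '' s) = f '' (UpperHalfPlane.coe '' s) := by
    rw [Set.image_image, Set.image_image]
    exact Set.image_congr fun z _ => h1 z
  rw [himg]
  set f' : ℂ → ℂ →L[ℝ] ℂ := fun w => ((((c : ℂ) * w + d) ^ 2)⁻¹) • (1 : ℂ →L[ℝ] ℂ) with hf'
  have hderiv : ∀ w ∈ UpperHalfPlane.coe '' s, HasFDerivWithinAt f (f' w) (UpperHalfPlane.coe '' s) w := by
    rintro w ⟨z, _, rfl⟩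
    exact ((deriv_moebius a b c d hdet _ (hden z)).complexToReal_fderiv).hasFDerivWithinAt
  have hinj : Set.InjOn f (UpperHalfPlane.coe '' s) := by
    rintro _ ⟨z₁, _, rfl⟩ _ ⟨z₂, _, rfl⟩ hww
    rw [← h1 z₁, ← h1 z₂] at hww
    have : g • z₁ = g • z₂ := UpperHalfPlane.coe_injective hww
    have : z₁ = z₂ := smul_left_cancel g this
    rw [this]
  rw [MeasureTheory.lintegral_image_eq_lintegral_abs_det_fderiv_mul volume hE hderiv hinj]
  apply setLIntegral_congr_fun hE
  rintro _ ⟨z, _, rfl⟩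
  have hN : 0 < Complex.normSq ((c : ℂ) * (z : ℂ) + d) := by
    simpa [Complex.normSq_pos] using hden z
  set N : ℝ := Complex.normSq ((c : ℂ) * (z : ℂ) + d) with hNdef
  have hdet' : (f' (z : ℂ)).det = (N ^ 2)⁻¹ := by
    rw [hf', det_complex_smul_one, map_inv₀, map_pow]
  have hfim : (f (z : ℂ)).im = z.im / N := by
    rw [hf]; exact im_moebius a b c d hdet _ (hden z)
  beta_reduce
  rw [hdet', hfim]
  rw [abs_of_nonneg (by positivity)]
  rw [← ENNReal.ofReal_mul (by positivity)]
  congr 1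
  have hzim : z.im ≠ 0 := z.im_ne_zero
  field_simp
  rw [UpperHalfPlane.coe_im, div_self (pow_ne_zero 2 hzim)]

open Set in
lemma integral_slice (c r : ℝ) (hr : 0 < r) (hcr : c ^ 2 - r ^ 2 = 1) (hc : 0 < c) :
    ∫ y in (c - r)..(c + r), 2 * √(r ^ 2 - (y - c) ^ 2) / y ^ 2 = 2 * π * c - 2 * π := by
  have hrc : r < c := by nlinarith
  have ha : 0 < c - r := by linarith
  have hab : c - r ≤ c + r := by linarith
  set F : ℝ → ℝ := fun y =>
    -2 * (√(r ^ 2 - (y - c) ^ 2) / y) - 2 * arcsin ((y - c) / r)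
      + 2 * c * arcsin ((c * y - 1) / (r * y)) with hF
  have hy0 : ∀ y ∈ Icc (c - r) (c + r), y ≠ 0 := fun y hy => (lt_of_lt_of_le ha hy.1).ne'
  have hcont : ContinuousOn F (Icc (c - r) (c + r)) := by
    apply ContinuousOn.add
    · apply ContinuousOn.sub
      · exact continuousOn_const.mul
          (((continuous_const.sub ((continuous_id.sub continuous_const).pow 2)).sqrt.continuousOn).div
            continuousOn_id hy0)
      · exact continuousOn_const.mul
          (Real.continuous_arcsin.comp ((continuous_id.sub continuous_const).div_const r)).continuousOn
    · exact continuousOn_const.mul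
        (Real.continuous_arcsin.comp_continuousOn
          (ContinuousOn.div (by fun_prop) (by fun_prop)
            (fun y hy => mul_ne_zero hr.ne' (hy0 y hy))))
  have hderiv : ∀ y ∈ Ioo (c - r) (c + r),
      HasDerivWithinAt F (2 * √(r ^ 2 - (y - c) ^ 2) / y ^ 2) (Ioi y) y := by
    intro y hy
    have hy0' : 0 < y := lt_trans ha hy.1
    have hq : 0 < r ^ 2 - (y - c) ^ 2 := by nlinarith [hy.1, hy.2]
    have hs0 : 0 < √(r ^ 2 - (y - c) ^ 2) := Real.sqrt_pos.2 hq
    set s := √(r ^ 2 - (y - c) ^ 2) with hs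
    have hs2 : s ^ 2 = r ^ 2 - (y - c) ^ 2 := Real.sq_sqrt hq.le
    have d1 : HasDerivAt (fun y => r ^ 2 - (y - c) ^ 2) (-(2 * (y - c))) y := by
      have := (hasDerivAt_const y (r ^ 2)).sub (((hasDerivAt_id y).sub_const c).pow 2)
      refine this.congr_deriv ?_
      simp
    have dsqrt : HasDerivAt (fun y => √(r ^ 2 - (y - c) ^ 2)) (-(y - c) / s) y := by
      have := d1.sqrt hq.ne'
      convert this using 1
      rw [← hs]
      field_simp
    have dT1 : HasDerivAt (fun y => -2 * (√(r ^ 2 - (y - c) ^ 2) / y))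
        (-2 * ((-(y - c) / s * y - s * 1) / y ^ 2)) y := by
      exact ((dsqrt.div (hasDerivAt_id y) hy0'.ne').const_mul (-2))
    have hx1 : (y - c) / r < 1 := by rw [div_lt_one hr]; nlinarith [hy.2]
    have hx2 : -1 < (y - c) / r := by rw [lt_div_iff₀ hr]; nlinarith [hy.1]
    have dT2 : HasDerivAt (fun y => 2 * arcsin ((y - c) / r))
        (2 * (1 / √(1 - ((y - c) / r) ^ 2) * (1 / r))) y := by
      have inner : HasDerivAt (fun y => (y - c) / r) (1 / r) y := by
        simpa using ((hasDerivAt_id y).sub_const c).div_const r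
      exact ((Real.hasDerivAt_arcsin hx2.ne' hx1.ne).comp y inner).const_mul 2
    have hkey : (r * y) ^ 2 - (c * y - 1) ^ 2 = r ^ 2 - (y - c) ^ 2 := by
      linear_combination (1 - y ^ 2) * hcr
    have hry : 0 < r * y := by positivity
    have habs : |c * y - 1| < r * y := by
      have h2 : (c * y - 1) ^ 2 < (r * y) ^ 2 := by nlinarith [hq]
      calc |c * y - 1| = √((c * y - 1) ^ 2) := (Real.sqrt_sq_eq_abs _).symm
        _ < √((r * y) ^ 2) := Real.sqrt_lt_sqrt (sq_nonneg _) h2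
        _ = |r * y| := Real.sqrt_sq_eq_abs _
        _ = r * y := abs_of_pos hry
    have hphi1 : (c * y - 1) / (r * y) < 1 := by
      rw [div_lt_one hry]; exact lt_of_abs_lt habs
    have hphi2 : -1 < (c * y - 1) / (r * y) := by
      rw [lt_div_iff₀ hry]; have := (abs_lt.1 habs).1; linarith
    have dphi : HasDerivAt (fun y => (c * y - 1) / (r * y))
        ((c * (r * y) - (c * y - 1) * r) / (r * y) ^ 2) y := by
      have hnum : HasDerivAt (fun y => c * y - 1) c y := by
        simpa using ((hasDerivAt_id y).const_mul c).sub_const 1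
      have hden : HasDerivAt (fun y => r * y) r y := by
        simpa using (hasDerivAt_id y).const_mul r
      exact hnum.div hden hry.ne'
    have dT3 : HasDerivAt (fun y => 2 * c * arcsin ((c * y - 1) / (r * y)))
        (2 * c * (1 / √(1 - ((c * y - 1) / (r * y)) ^ 2) *
          ((c * (r * y) - (c * y - 1) * r) / (r * y) ^ 2))) y :=
      ((Real.hasDerivAt_arcsin hphi2.ne' hphi1.ne).comp y dphi).const_mul (2 * c)
    have dF := (dT1.sub dT2).add dT3
    have e1 : √(1 - ((y - c) / r) ^ 2) = s / r := by
      rw [show 1 - ((y - c) / r) ^ 2 = (r ^ 2 - (y - c) ^ 2) / r ^ 2 by field_simp,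
        Real.sqrt_div hq.le, Real.sqrt_sq hr.le, ← hs]
    have e2 : √(1 - ((c * y - 1) / (r * y)) ^ 2) = s / (r * y) := by
      rw [show 1 - ((c * y - 1) / (r * y)) ^ 2 = (r ^ 2 - (y - c) ^ 2) / (r * y) ^ 2 by
        rw [← hkey]; field_simp,
        Real.sqrt_div hq.le, Real.sqrt_sq hry.le, ← hs]
    have hval : -2 * ((-(y - c) / s * y - s * 1) / y ^ 2) -
          2 * (1 / √(1 - ((y - c) / r) ^ 2) * (1 / r)) +
          2 * c * (1 / √(1 - ((c * y - 1) / (r * y)) ^ 2) *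
            ((c * (r * y) - (c * y - 1) * r) / (r * y) ^ 2)) =
        2 * s / y ^ 2 := by
      rw [e1, e2]
      field_simp
      ring
    rw [hF]
    have := dF.hasDerivWithinAt (s := Ioi y)
    rw [hval] at this
    exact this
  have hint : IntervalIntegrable (fun y => 2 * √(r ^ 2 - (y - c) ^ 2) / y ^ 2)
      volume (c - r) (c + r) := by
    apply ContinuousOn.intervalIntegrable
    rw [uIcc_of_le hab]
    exact (continuousOn_const.mul
      (continuous_const.sub ((continuous_id.sub continuous_const).pow 2)).sqrt.continuousOn).div
      (continuousOn_pow 2) (fun y hy => pow_ne_zero 2 (hy0 y hy))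
  rw [intervalIntegral.integral_eq_sub_of_hasDeriv_right_of_le hab hcont hderiv hint]
  have hb1 : ((c + r) - c) / r = 1 := by field_simp; ring
  have ha1 : ((c - r) - c) / r = -1 := by field_simp; ring
  have hb2 : (c * (c + r) - 1) / (r * (c + r)) = 1 := by
    rw [div_eq_one_iff_eq (by positivity)]
    linear_combination hcr
  have ha2 : (c * (c - r) - 1) / (r * (c - r)) = -1 := by
    rw [div_eq_iff (by positivity : r * (c - r) ≠ 0)]
    linear_combination hcr
  rw [hF]
  simp only [hb1, ha1, hb2, ha2, Real.arcsin_one, Real.arcsin_neg_one]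
  rw [show r ^ 2 - ((c + r) - c) ^ 2 = 0 by ring, show r ^ 2 - ((c - r) - c) ^ 2 = 0 by ring,
    Real.sqrt_zero]
  ring

lemma ball_area (R : ℝ) (hR : 0 < R) :
    ENNReal.ofReal (2 * π * Real.cosh R - 2 * π)
      ≤ hyperbolicArea (Metric.ball UpperHalfPlane.I R) := by
  set c := Real.cosh R with hcdef
  set r := Real.sinh R with hrdef
  have hr : 0 < r := Real.sinh_pos_iff.2 hR
  have hc : 0 < c := Real.cosh_pos R
  have hcr : c ^ 2 - r ^ 2 = 1 := Real.cosh_sq_sub_sinh_sq R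
  have hrc : r < c := by nlinarith
  have ha : 0 < c - r := by linarith
  have hab : c - r ≤ c + r := by linarith
  rw [hyperbolicArea_apply _ measurableSet_ball, UpperHalfPlane.image_coe_ball]
  have hrad : UpperHalfPlane.I.im * Real.sinh R = r := by simp [UpperHalfPlane.I_im, hrdef]
  have hre : (UpperHalfPlane.I.center R : ℂ).re = 0 := by
    simp [UpperHalfPlane.coe_re, UpperHalfPlane.center_re, UpperHalfPlane.I_re]
  have him : (UpperHalfPlane.I.center R : ℂ).im = c := by
    simp [UpperHalfPlane.coe_im, UpperHalfPlane.center_im, UpperHalfPlane.I_im, hcdef]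
  rw [hrad]
  set D : Set (ℝ × ℝ) := {p | p.1 ^ 2 + (p.2 - c) ^ 2 < r ^ 2} with hDdef
  have hD : MeasurableSet D := measurableSet_lt (by fun_prop) measurable_const
  set e := Complex.measurableEquivRealProd with hedef
  have hmp : MeasurePreserving (⇑e.symm) volume volume :=
    Complex.volume_preserving_equiv_real_prod.symm e
  have hsymm_apply : ∀ p : ℝ × ℝ, (e.symm p : ℂ) = Complex.mk p.1 p.2 := fun p => rfl
  have himg : ⇑e.symm '' D = Metric.ball ((UpperHalfPlane.I.center R : ℂ)) r := by
    ext w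
    constructor
    · rintro ⟨p, hp, rfl⟩
      have h1 : (e.symm p).re = p.1 := rfl
      have h2 : (e.symm p).im = p.2 := rfl
      rw [Metric.mem_ball, Complex.dist_eq_re_im, hre, him, Real.sqrt_lt' hr, h1, h2]
      simpa [hDdef, sub_zero] using hp
    · intro hw
      refine ⟨(w.re, w.im), ?_, by apply Complex.ext <;> rfl⟩
      rw [Metric.mem_ball, Complex.dist_eq_re_im, hre, him, Real.sqrt_lt' hr] at hw
      simpa [hDdef, sub_zero] using hw
  calc ENNReal.ofReal (2 * π * c - 2 * π)
      = ENNReal.ofReal (∫ y in (c - r)..(c + r), 2 * √(r ^ 2 - (y - c) ^ 2) / y ^ 2) := by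
        rw [integral_slice c r hr hcr hc]
    _ = ∫⁻ y in Set.Ioo (c - r) (c + r),
          ENNReal.ofReal (1 / y ^ 2) * ENNReal.ofReal (2 * √(r ^ 2 - (y - c) ^ 2)) := by
        rw [intervalIntegral.integral_of_le hab, MeasureTheory.integral_Ioc_eq_integral_Ioo]
        have hcontOn : ContinuousOn (fun y : ℝ => 2 * √(r ^ 2 - (y - c) ^ 2) / y ^ 2)
            (Set.Icc (c - r) (c + r)) := by
          exact (continuousOn_const.mul
            (continuous_const.sub ((continuous_id.sub continuous_const).pow 2)).sqrt.continuousOn).div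
            (continuousOn_pow 2)
            (fun y hy => pow_ne_zero 2 (lt_of_lt_of_le ha hy.1).ne')
        have hInt : MeasureTheory.IntegrableOn
            (fun y : ℝ => 2 * √(r ^ 2 - (y - c) ^ 2) / y ^ 2) (Set.Ioo (c - r) (c + r)) volume :=
          (hcontOn.integrableOn_Icc).mono_set Set.Ioo_subset_Icc_self
        rw [MeasureTheory.ofReal_integral_eq_lintegral_ofReal hInt
          (Filter.Eventually.of_forall fun y => by positivity)]
        apply lintegral_congr_ae
        apply Filter.Eventually.of_forall
        intro y
        dsimp only
        rw [← ENNReal.ofReal_mul (by positivity : (0:ℝ) ≤ 1 / y ^ 2)]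
        congr 1
        ring
    _ ≤ ∫⁻ y, ENNReal.ofReal (1 / y ^ 2) * ENNReal.ofReal (2 * √(r ^ 2 - (y - c) ^ 2)) :=
        setLIntegral_le_lintegral _ _
    _ = ∫⁻ y, ∫⁻ x, D.indicator (fun p : ℝ × ℝ => ENNReal.ofReal (1 / p.2 ^ 2)) (x, y) := by
        apply lintegral_congr_ae
        apply Filter.Eventually.of_forall
        intro y
        dsimp only
        have hfun : (fun x : ℝ => D.indicator (fun p : ℝ × ℝ => ENNReal.ofReal (1 / p.2 ^ 2)) (x, y))
            = (Set.Ioo (-√(r ^ 2 - (y - c) ^ 2)) (√(r ^ 2 - (y - c) ^ 2))).indicator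
                (fun _ => ENNReal.ofReal (1 / y ^ 2)) := by
          funext x
          have hmem : ((x, y) ∈ D) ↔ x ∈ Set.Ioo (-√(r ^ 2 - (y - c) ^ 2)) (√(r ^ 2 - (y - c) ^ 2)) := by
            rw [hDdef]
            simp only [Set.mem_setOf_eq, Set.mem_Ioo]
            rw [← Real.sq_lt]
            constructor <;> intro h <;> linarith
          by_cases hx : (x, y) ∈ D
          · rw [Set.indicator_of_mem hx, Set.indicator_of_mem (hmem.1 hx)]
          · rw [Set.indicator_of_notMem hx, Set.indicator_of_notMem (fun h => hx (hmem.2 h))]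
        rw [hfun, lintegral_indicator measurableSet_Ioo, setLIntegral_const, Real.volume_Ioo]
        congr 1
        congr 1
        ring
    _ = ∫⁻ p in D, ENNReal.ofReal (1 / p.2 ^ 2) := by
        rw [← lintegral_indicator hD, Measure.volume_eq_prod,
          MeasureTheory.lintegral_prod_symm]
        exact ((ENNReal.measurable_ofReal.comp
          (measurable_const.div (measurable_snd.pow_const 2))).indicator hD).aemeasurable
    _ = ∫⁻ w in ⇑e.symm '' D, ENNReal.ofReal (1 / w.im ^ 2) := by
        rw [← hmp.setLIntegral_comp_emb e.symm.measurableEmbedding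
          (fun w : ℂ => ENNReal.ofReal (1 / w.im ^ 2)) D]
        rfl
    _ = ∫⁻ w in Metric.ball ((UpperHalfPlane.I.center R : ℂ)) r,
          ENNReal.ofReal (1 / w.im ^ 2) := by rw [himg]

open scoped Pointwise

/-- If `S = Γ\ℍ²` is a compact hyperbolic surface (`Γ ≤ SL(2, ℝ)` discrete and
acting freely, with compact quotient) of area `A`, then its systole—the infimum of
translation lengths of the nontrivial elements of `Γ`—satisfies
`sys(S) ≤ 2 log(A/π + 2)`. -/
theorem systole_le_of_area (Γ : Subgroup SL(2, ℝ))
    (hdisc : ∀ K : Set ℍ, IsCompact K → {γ : Γ | ((γ • ·) '' K ∩ K).Nonempty}.Finite)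
    (hfree : ∀ γ : Γ, γ ≠ 1 → ∀ z : ℍ, γ • z ≠ z)
    (hcpt : CompactSpace (Quotient (MulAction.orbitRel Γ ℍ)))
    (F : Set ℍ) (hF : IsFundamentalDomain Γ F hyperbolicArea)
    (A : ℝ) (hA : 0 < A) (hAF : hyperbolicArea F = ENNReal.ofReal A) :
    sInf {r : ℝ | ∃ γ : Γ, γ ≠ 1 ∧ ∃ z : ℍ, r = dist z (γ • z)} ≤
      2 * Real.log (A / π + 2) := by
  have hπ : 0 < π := Real.pi_pos
  set u : ℝ := A / π + 2 with hu
  have hu2 : 2 < u := by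
    have : 0 < A / π := div_pos hA hπ
    rw [hu]; linarith
  have hu1 : 1 < u := by linarith
  set R : ℝ := Real.log u with hRdef
  have hR : 0 < R := Real.log_pos hu1
  by_contra hcon
  push_neg at hcon
  set S := {r : ℝ | ∃ γ : Γ, γ ≠ 1 ∧ ∃ z : ℍ, r = dist z (γ • z)} with hS
  have hSlb : ∀ r ∈ S, (0:ℝ) ≤ r := by rintro r ⟨γ, hγ, z, rfl⟩; exact dist_nonneg
  have hgt : ∀ γ : Γ, γ ≠ 1 → ∀ z : ℍ, 2 * R < dist z (γ • z) := by
    intro γ hγ z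
    have hmem : dist z (γ • z) ∈ S := ⟨γ, hγ, z, rfl⟩
    have hle := csInf_le ⟨0, hSlb⟩ hmem
    linarith
  -- instances
  haveI hcount : Countable Γ := by
    rw [← Set.countable_univ_iff]
    apply Set.Countable.mono (s₂ := ⋃ n : ℕ,
      {γ : Γ | ((γ • ·) '' (insert UpperHalfPlane.I (compactCovering ℍ n)) ∩
        (insert UpperHalfPlane.I (compactCovering ℍ n))).Nonempty})
    · intro γ _
      obtain ⟨n, hn⟩ := exists_mem_compactCovering ((γ : SL(2,ℝ)) • UpperHalfPlane.I)
      refine Set.mem_iUnion.2 ⟨n, ⟨γ • UpperHalfPlane.I,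
        ⟨UpperHalfPlane.I, Set.mem_insert _ _, rfl⟩, ?_⟩⟩
      rw [Subgroup.smul_def]
      exact Set.mem_insert_of_mem _ hn
    · exact Set.countable_iUnion fun n =>
        (hdisc _ ((isCompact_compactCovering ℍ n).insert UpperHalfPlane.I)).countable
  letI : MeasurableSpace Γ := ⊤
  haveI : MeasurableSMul Γ ℍ := by
    refine { measurable_const_smul := ?_, measurable_smul_const := ?_ }
    · intro γ
      have heq : (fun z : ℍ => γ • z) = (fun z : ℍ => (γ : SL(2,ℝ)) • z) :=
        funext fun z => Subgroup.smul_def γ z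
      rw [heq]
      exact (isometry_smul ℍ (γ : SL(2,ℝ))).continuous.measurable
    · intro z
      exact measurable_from_top
  haveI : SMulInvariantMeasure Γ ℍ hyperbolicArea := by
    constructor
    intro γ s hs
    have h1 : (fun z : ℍ => γ • z) ⁻¹' s = (((γ : SL(2,ℝ))⁻¹) • ·) '' s := by
      ext z
      constructor
      · intro hz
        exact ⟨γ • z, hz, by rw [Subgroup.smul_def]; exact inv_smul_smul _ _⟩
      · rintro ⟨w, hw, rfl⟩
        simpa [Subgroup.smul_def] using hw
    rw [h1]
    exact hyperbolicArea_smul_image _ s hs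
  set B := Metric.ball UpperHalfPlane.I R with hBdef
  -- translates of B are pairwise disjoint
  have hsmulB : ∀ γ : Γ, (γ • B : Set ℍ) = Metric.ball ((γ : SL(2,ℝ)) • UpperHalfPlane.I) R := by
    intro γ
    have : (γ • B : Set ℍ) = ((γ : SL(2,ℝ)) • B : Set ℍ) := by
      ext x
      simp only [Set.mem_smul_set, Subgroup.smul_def]
    rw [this, Metric.smul_ball]
  have hdisjoint : ∀ γ γ' : Γ, γ ≠ γ' → Disjoint (γ • B : Set ℍ) (γ' • B : Set ℍ) := by
    intro γ γ' hne
    rw [Set.disjoint_left]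
    rintro x hx hx'
    rw [hsmulB γ, Metric.mem_ball] at hx
    rw [hsmulB γ', Metric.mem_ball] at hx'
    set δ : Γ := γ'⁻¹ * γ with hδ
    have hδ1 : δ ≠ 1 := by
      intro h
      rw [hδ] at h
      exact hne (inv_mul_eq_one.1 h).symm
    have hd := hgt δ hδ1 UpperHalfPlane.I
    have hdist : dist UpperHalfPlane.I (δ • UpperHalfPlane.I)
        ≤ dist x ((γ : SL(2,ℝ)) • UpperHalfPlane.I) + dist x ((γ' : SL(2,ℝ)) • UpperHalfPlane.I) := by
      have e1 : dist UpperHalfPlane.I (δ • UpperHalfPlane.I)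
          = dist ((γ' : SL(2,ℝ)) • UpperHalfPlane.I) ((γ : SL(2,ℝ)) • UpperHalfPlane.I) := by
        rw [Subgroup.smul_def, hδ]
        have hcoe : ((γ'⁻¹ * γ : Γ) : SL(2,ℝ)) = (γ' : SL(2,ℝ))⁻¹ * (γ : SL(2,ℝ)) := rfl
        rw [hcoe]
        calc dist UpperHalfPlane.I (((γ' : SL(2,ℝ))⁻¹ * (γ : SL(2,ℝ))) • UpperHalfPlane.I)
            = dist ((γ' : SL(2,ℝ))⁻¹ • ((γ' : SL(2,ℝ)) • UpperHalfPlane.I))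
              ((γ' : SL(2,ℝ))⁻¹ • ((γ : SL(2,ℝ)) • UpperHalfPlane.I)) := by
              rw [inv_smul_smul, smul_smul]
          _ = dist ((γ' : SL(2,ℝ)) • UpperHalfPlane.I) ((γ : SL(2,ℝ)) • UpperHalfPlane.I) :=
              dist_smul _ _ _
      rw [e1]
      calc dist ((γ' : SL(2,ℝ)) • UpperHalfPlane.I) ((γ : SL(2,ℝ)) • UpperHalfPlane.I)
          ≤ dist ((γ' : SL(2,ℝ)) • UpperHalfPlane.I) x
            + dist x ((γ : SL(2,ℝ)) • UpperHalfPlane.I) := dist_triangle _ _ _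
        _ = dist x ((γ : SL(2,ℝ)) • UpperHalfPlane.I) + dist x ((γ' : SL(2,ℝ)) • UpperHalfPlane.I) := by
            rw [dist_comm ((γ' : SL(2,ℝ)) • UpperHalfPlane.I) x]; ring
    linarith
  -- measure bound
  have hμB : hyperbolicArea B ≤ hyperbolicArea F := by
    rw [hF.measure_eq_tsum B]
    have hnm : ∀ γ : Γ, NullMeasurableSet (γ • B ∩ F) hyperbolicArea := fun γ => by
      rw [hsmulB]
      exact (Metric.isOpen_ball.measurableSet.nullMeasurableSet).inter hF.nullMeasurableSet
    have hpair : Pairwise (Function.onFun (AEDisjoint hyperbolicArea) fun γ : Γ => γ • B ∩ F) := by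
      intro γ γ' hne
      apply Disjoint.aedisjoint
      exact ((hdisjoint γ γ' hne).mono Set.inter_subset_left Set.inter_subset_left)
    rw [← measure_iUnion₀ hpair hnm]
    exact measure_mono (Set.iUnion_subset fun γ => Set.inter_subset_right)
  have hball := ball_area R hR
  have hchain : ENNReal.ofReal (2 * π * Real.cosh R - 2 * π) ≤ ENNReal.ofReal A := by
    calc ENNReal.ofReal (2 * π * Real.cosh R - 2 * π) ≤ hyperbolicArea B := hball
      _ ≤ hyperbolicArea F := hμB
      _ = ENNReal.ofReal A := hAF
  have hreal : 2 * π * Real.cosh R - 2 * π ≤ A :=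
    (ENNReal.ofReal_le_ofReal_iff hA.le).1 hchain
  have hcosh : Real.cosh R = (u + u⁻¹) / 2 := Real.cosh_log (by linarith)
  have hπu : π * u = A + 2 * π := by
    rw [hu]; field_simp
  have hui : 0 < π * u⁻¹ := by positivity
  rw [hcosh] at hreal
  have hfin : π * u + π * u⁻¹ - 2 * π ≤ A := by nlinarith [hreal]
  rw [hπu] at hfin
  linarith [hui]
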